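/- Let α = ∛2 and β a real root of X² + α²X + (1 - α²). If c₃, c₄, c₅, c₆ ∈ ℚ satisfy that c₃·u₃ + c₄·u₄ + c₅·u₅ + c₆·u₆ has all coordinates rational, where u₃,…,u₆ are the vectors in ℝ¹⁰ defined in the paper (Section 3.1), then c₃ = c₄ = c₅ = c₆ = 0. -/

import Mathlib

open Polynomial

lemma cube_ne_two (b : ℚ) {α : ℝ} (hα : α ^ 3 = 2) : b ^ 3 ≠ 2 := by
  have hirr : Irrational α := by
    apply irrational_nrt_of_notint_nrt 3 2 (by exact_mod_cast hα) _ (by norm_num)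
    rintro ⟨y, rfl⟩
    have h2 : y ^ 3 = 2 := by exact_mod_cast hα
    have h3 : 0 < y := by nlinarith [sq_nonneg y]
    have h4 : y < 2 := by nlinarith [sq_nonneg y]
    have : y = 1 := by omega
    simp [this] at h2
  intro hb
  have hbr : (b : ℝ) ^ 3 = α ^ 3 := by rw [hα]; exact_mod_cast hb
  have : (b : ℝ) = α := by
    have := Odd.strictMono_pow (R := ℝ) (by decide : Odd 3)
    exact this.injective hbr
  exact hirr ⟨b, this⟩

lemma cubic_indep {α : ℝ} (hα : α ^ 3 = 2) (a b c : ℚ)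
    (habc : (a : ℝ) + b * α + c * α ^ 2 = 0) : a = 0 ∧ b = 0 ∧ c = 0 := by
  have hirr3 : Irreducible (X ^ 3 - C (2 : ℚ)) :=
    X_pow_sub_C_irreducible_of_prime (by norm_num) (fun b => cube_ne_two b hα)
  have hmin : X ^ 3 - C (2 : ℚ) = minpoly ℚ α := by
    apply minpoly.eq_of_irreducible_of_monic hirr3
    · simp [hα]
    · exact (monic_X_pow 3).sub_of_left (by simpa using degree_C_lt.trans_le (by norm_num))
  by_contra hc
  have hp : (C a + C b * X + C c * X ^ 2 : ℚ[X]) ≠ 0 := by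
    intro h0
    apply hc
    have h00 := congrArg (fun p => Polynomial.coeff p 0) h0
    have h1 := congrArg (fun p => Polynomial.coeff p 1) h0
    have h2 := congrArg (fun p => Polynomial.coeff p 2) h0
    simp [coeff_add, coeff_C, coeff_C_mul, coeff_X_pow] at h00 h1 h2
    exact ⟨h00, h1, h2⟩
  have hdeg := minpoly.degree_le_of_ne_zero ℚ α hp (by simp [habc])
  rw [← hmin, degree_X_pow_sub_C (by norm_num)] at hdeg
  have hle : (C a + C b * X + C c * X ^ 2 : ℚ[X]).degree ≤ 2 := by
    compute_degree
  exact absurd (hdeg.trans hle) (by decide)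


/-- If a rational linear combination c₃u₃ + c₄u₄ + c₅u₅ + c₆u₆ of
the four kernel vectors has all rational coordinates, then all cᵢ are zero. -/
theorem rational_combination_trivial (α β : ℝ) (hα : α ^ 3 = 2)
    (hβ : β ^ 2 + α ^ 2 * β + (1 - α ^ 2) = 0)
    (hβα : β ∉ IntermediateField.adjoin ℚ ({α} : Set ℝ))
    (c₃ c₄ c₅ c₆ : ℚ)
    (h : ∀ i : Fin 10, ∃ q : ℚ,
      (c₃ : ℝ) * (![-α + 2, 0, 0, 0, (α - 4)/(4*α^2 - 2), 0, 0, 0, 0, 1] i)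
      + (c₄ : ℝ) * (![-2*α^2 + 1, 0, 0, 0, 1/2, 0, 0, 0, 1, 0] i)
      + (c₅ : ℝ) * (![α^2 + 2*α + 2*β + 2, 0, 0, 0,
            (α^2 - 4*α)/(4*α^2 - 2), 0, 1, 0, 0, 0] i)
      + (c₆ : ℝ) * (![-α + 2, 0, 0, 0, (-α + 4)/(4*α^2 - 2), 1, 0, 0, 0, 0] i)
      = (q : ℝ)) :
    c₃ = 0 ∧ c₄ = 0 ∧ c₅ = 0 ∧ c₆ = 0 := by
  set F := IntermediateField.adjoin ℚ ({α} : Set ℝ) with hF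
  have hq : ∀ q : ℚ, (q : ℝ) ∈ F := fun q => SubfieldClass.ratCast_mem _ q
  have hαF : α ∈ F := IntermediateField.mem_adjoin_simple_self ℚ α
  have h2F : (2 : ℝ) ∈ F := by simpa using hq 2
  obtain ⟨q0, hq0⟩ := h 0
  simp only [Matrix.cons_val_zero] at hq0
  obtain ⟨q4, hq4⟩ := h 4
  simp only [Matrix.cons_val_four, Matrix.cons_val_zero, Matrix.head_cons,
    Matrix.tail_cons] at hq4
  -- c₅ = 0
  have hc5 : c₅ = 0 := by
    by_contra hc5
    have h5 : (c₅ : ℝ) ≠ 0 := by exact_mod_cast hc5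
    apply hβα
    have hβeq : β = ((q0:ℝ) - c₃*(-α+2) - c₄*(-2*α^2+1) - c₅*(α^2+2*α+2) - c₆*(-α+2)) / (2*c₅) := by
      rw [eq_div_iff (mul_ne_zero two_ne_zero h5)]
      linear_combination hq0
    rw [hβeq]
    refine div_mem ?_ (mul_mem h2F (hq c₅))
    refine sub_mem (sub_mem (sub_mem (sub_mem (hq q0) ?_) ?_) ?_) ?_
    · exact mul_mem (hq c₃) (add_mem (neg_mem hαF) h2F)
    · exact mul_mem (hq c₄) (add_mem (mul_mem (neg_mem h2F) (pow_mem hαF 2)) (one_mem F))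
    · exact mul_mem (hq c₅) (add_mem (add_mem (pow_mem hαF 2) (mul_mem h2F hαF)) h2F)
    · exact mul_mem (hq c₆) (add_mem (neg_mem hαF) h2F)
  -- coordinate 0: independence
  have key0 : ((2*c₃+c₄+2*c₆-q0 : ℚ) : ℝ) + ((-c₃-c₆ : ℚ) : ℝ) * α + ((-2*c₄ : ℚ) : ℝ) * α ^ 2 = 0 := by
    push_cast
    rw [hc5] at hq0
    push_cast at hq0
    linarith [hq0]
  obtain ⟨ha0, hb0, hcc0⟩ := cubic_indep hα _ _ _ key0
  have hc4 : c₄ = 0 := by linarith [hcc0]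
  have h36 : c₃ + c₆ = 0 := by linarith [hb0]
  -- coordinate 4
  have hden : 4 * α ^ 2 - 2 ≠ 0 := by
    intro hd
    have h2 : α ^ 2 = 1/2 := by linarith
    have h8 : (4:ℝ) = 1/8 := by
      calc (4:ℝ) = (α ^ 3) ^ 2 := by rw [hα]; norm_num
      _ = (α ^ 2) ^ 3 := by ring
      _ = 1/8 := by rw [h2]; norm_num
    norm_num at h8
  have key4 : ((-4*c₃+4*c₆+2*q4 : ℚ) : ℝ) + ((c₃-c₆ : ℚ) : ℝ) * α + ((-4*q4 : ℚ) : ℝ) * α ^ 2 = 0 := by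
    rw [hc4, hc5] at hq4
    push_cast at hq4 ⊢
    have hD : α ^ 2 * 4 - 2 ≠ 0 := by contrapose! hden; linarith
    field_simp [hD] at hq4
    linear_combination hq4 / 2
  obtain ⟨ha4, hb4, hcc4⟩ := cubic_indep hα _ _ _ key4
  have h36' : c₃ - c₆ = 0 := by linarith [hb4]
  refine ⟨by linarith, hc4, hc5, by linarith⟩
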